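/- Let Σ ∈ SPD(n), W ∈ Sym(n), Λ := Exp_Σ(W) and P := P_1 = Σ^{1/2}·exp((1/2)·Σ^{−1/2} W Σ^{−1/2})·Σ^{−1/2}. Then for all V, V' ∈ Sym(n), the matrices P V Pᵀ and P V' Pᵀ are symmetric and tr(Λ⁻¹ (P V Pᵀ) Λ⁻¹ (P V' Pᵀ)) = tr(Σ⁻¹ V Σ⁻¹ V'). That is, affine-invariant parallel transport V ↦ P V Pᵀ is a linear isometry from (Sym(n), g_Σ) to (Sym(n), g_Λ). -/

import Mathlib

open Matrix

/-- With `Λ = Exp_Σ(W)` and `P = P_1 = Σ^{1/2} exp(½ Σ^{−1/2} W Σ^{−1/2}) Σ^{−1/2}`,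
affine-invariant parallel transport `V ↦ P V Pᵀ` maps symmetric matrices to symmetric
matrices and is a linear isometry from `(Sym(n), g_Σ)` to `(Sym(n), g_Λ)`:
`tr(Λ⁻¹ (P V Pᵀ) Λ⁻¹ (P V' Pᵀ)) = tr(Σ⁻¹ V Σ⁻¹ V')`. -/
theorem spd_transport_isometry (n : ℕ) (hn : 1 ≤ n) (Sg W S : Matrix (Fin n) (Fin n) ℝ)
    (hSg : Sg.PosDef) (hW : W.IsSymm) (hS : S.PosDef) (hSS : S * S = Sg)
    (Lm P : Matrix (Fin n) (Fin n) ℝ)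
    (hLm : Lm = S * NormedSpace.exp (S⁻¹ * W * S⁻¹) * S)
    (hP : P = S * NormedSpace.exp ((1 / 2 : ℝ) • (S⁻¹ * W * S⁻¹)) * S⁻¹) :
    ∀ V V' : Matrix (Fin n) (Fin n) ℝ, V.IsSymm → V'.IsSymm →
      (P * V * Pᵀ).IsSymm ∧ (P * V' * Pᵀ).IsSymm ∧
        (Lm⁻¹ * (P * V * Pᵀ) * Lm⁻¹ * (P * V' * Pᵀ)).trace =
          (Sg⁻¹ * V * Sg⁻¹ * V').trace := by
  intro V V' hV hV'
  set A : Matrix (Fin n) (Fin n) ℝ := S⁻¹ * W * S⁻¹ with hA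
  set E : Matrix (Fin n) (Fin n) ℝ := NormedSpace.exp ((1 / 2 : ℝ) • A) with hE
  have hSsym : Sᵀ = S := hS.isHermitian.eq
  have hSinvsym : (S⁻¹)ᵀ = S⁻¹ := by rw [Matrix.transpose_nonsing_inv, hSsym]
  have hAsym : Aᵀ = A := by
    rw [hA, Matrix.transpose_mul, Matrix.transpose_mul, hSinvsym, hW.eq]
    rw [Matrix.mul_assoc]
  have hEsym : Eᵀ = E := by
    rw [hE, ← Matrix.exp_transpose, Matrix.transpose_smul, hAsym]
  have hSdet : IsUnit S.det := isUnit_iff_ne_zero.mpr (ne_of_gt hS.det_pos)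
  have hSc1 : S * S⁻¹ = 1 := Matrix.mul_nonsing_inv S hSdet
  have hSc2 : S⁻¹ * S = 1 := Matrix.nonsing_inv_mul S hSdet
  have hEc1 : E * E⁻¹ = 1 := Matrix.mul_nonsing_inv E
    ((Matrix.isUnit_iff_isUnit_det E).mp (Matrix.isUnit_exp _))
  have hEc2 : E⁻¹ * E = 1 := Matrix.nonsing_inv_mul E
    ((Matrix.isUnit_iff_isUnit_det E).mp (Matrix.isUnit_exp _))
  have hEE : E * E = NormedSpace.exp A := by
    rw [hE, ← Matrix.exp_add_of_commute _ _ (Commute.refl _)]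
    congr 1
    rw [← add_smul]
    norm_num
  have hPT : Pᵀ = S⁻¹ * E * S := by
    rw [hP, Matrix.transpose_mul, Matrix.transpose_mul, hSinvsym, hEsym, hSsym,
      Matrix.mul_assoc]
  -- symmetry of transported matrices
  have symm : ∀ X : Matrix (Fin n) (Fin n) ℝ, X.IsSymm → (P * X * Pᵀ).IsSymm := by
    intro X hX
    unfold Matrix.IsSymm
    rw [Matrix.transpose_mul, Matrix.transpose_mul, Matrix.transpose_transpose, hX.eq,
      Matrix.mul_assoc]
  refine ⟨symm V hV, symm V' hV', ?_⟩
  -- inverse of Lm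
  have hLminv : Lm⁻¹ = S⁻¹ * E⁻¹ * E⁻¹ * S⁻¹ := by
    rw [hLm, ← hEE, Matrix.mul_inv_rev, Matrix.mul_inv_rev, Matrix.mul_inv_rev,
      Matrix.mul_assoc, Matrix.mul_assoc]
    rw [Matrix.mul_assoc]
  have hSginv : Sg⁻¹ = S⁻¹ * S⁻¹ := by rw [← hSS, Matrix.mul_inv_rev]
  -- cancellation helpers
  have c1 : ∀ X : Matrix (Fin n) (Fin n) ℝ, S * (S⁻¹ * X) = X := by
    intro X; rw [← Matrix.mul_assoc, hSc1, Matrix.one_mul]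
  have c2 : ∀ X : Matrix (Fin n) (Fin n) ℝ, S⁻¹ * (S * X) = X := by
    intro X; rw [← Matrix.mul_assoc, hSc2, Matrix.one_mul]
  have c3 : ∀ X : Matrix (Fin n) (Fin n) ℝ, E * (E⁻¹ * X) = X := by
    intro X; rw [← Matrix.mul_assoc, hEc1, Matrix.one_mul]
  have c4 : ∀ X : Matrix (Fin n) (Fin n) ℝ, E⁻¹ * (E * X) = X := by
    intro X; rw [← Matrix.mul_assoc, hEc2, Matrix.one_mul]
  rw [hLminv, hPT, hP, hSginv]
  have key : S⁻¹ * E⁻¹ * E⁻¹ * S⁻¹ * (S * E * S⁻¹ * V * (S⁻¹ * E * S)) *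
      (S⁻¹ * E⁻¹ * E⁻¹ * S⁻¹) * (S * E * S⁻¹ * V' * (S⁻¹ * E * S)) =
      S⁻¹ * (E⁻¹ * (S⁻¹ * (V * (S⁻¹ * (S⁻¹ * (V' * (S⁻¹ * (E * S)))))))) := by
    simp only [Matrix.mul_assoc, c1, c2, c3, c4]
  rw [key]
  rw [Matrix.trace_mul_comm (S⁻¹) _]
  simp only [Matrix.mul_assoc]
  rw [Matrix.trace_mul_comm (E⁻¹) _]
  simp only [Matrix.mul_assoc, c1, c2, c3, c4, hEc1, hEc2, hSc1, hSc2, Matrix.mul_one]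
  simp only [← Matrix.mul_assoc]
  rw [Matrix.trace_mul_comm]
  simp only [Matrix.mul_assoc]
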